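/- The braid matrix R̂ of S14 satisfies the minimal polynomial identity (R̂ - I)(R̂ - qI)(R̂ + qI) = 0, and no polynomial identity of lower degree: R̂² ∉ span{I, R̂} when q² ≠ 1 and q ≠ 0 (in particular (R̂-I)(R̂-qI) ≠ 0, (R̂-I)(R̂+qI) ≠ 0, (R̂-qI)(R̂+qI) ≠ 0). -/
import Mathlib


open Matrix

theorem S14_minimal_polynomial (q : ℂ) (hq0 : q ≠ 0) (hq1 : q ^ 2 ≠ 1) :
    let Rhat : Matrix (Fin 4) (Fin 4) ℂ :=
      !![0,0,0,q; 0,1,0,0; 0,0,1,0; q,0,0,0]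
    let I1 : Matrix (Fin 4) (Fin 4) ℂ := 1
    (Rhat - I1) * (Rhat - q • I1) * (Rhat + q • I1) = 0 ∧
    (¬ ∃ a b : ℂ, Rhat ^ 2 = a • I1 + b • Rhat) ∧
    (Rhat - I1) * (Rhat - q • I1) ≠ 0 ∧
    (Rhat - I1) * (Rhat + q • I1) ≠ 0 ∧
    (Rhat - q • I1) * (Rhat + q • I1) ≠ 0 := by
  intro Rhat I1
  refine ⟨?_, ?_, ?_, ?_, ?_⟩
  · ext i j
    fin_cases i <;> fin_cases j <;>
      simp [Rhat, I1, Matrix.mul_apply, Fin.sum_univ_four, Matrix.one_apply,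
        Matrix.vecHead, Matrix.vecTail] <;> ring
  · rintro ⟨a, b, h⟩
    have h00 := congrFun (congrFun h 0) 0
    have h11 := congrFun (congrFun h 1) 1
    have h03 := congrFun (congrFun h 0) 3
    simp [Rhat, I1, pow_two, Matrix.mul_apply, Fin.sum_univ_four, Matrix.one_apply,
      Matrix.vecHead, Matrix.vecTail] at h00 h11 h03
    rcases h03 with h03 | h03
    · subst h03
      exact hq1 (by rw [pow_two, h00]; linear_combination -h11)
    · exact hq0 h03
  · intro h
    have h2 := congrFun (congrFun h 0) 0
    simp [Rhat, I1, Matrix.mul_apply, Fin.sum_univ_four, Matrix.one_apply,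
      Matrix.vecHead, Matrix.vecTail] at h2
    rcases mul_eq_zero.mp (show q * (1 + q) = 0 by linear_combination h2) with h' | h'
    · exact hq0 h'
    · exact hq1 (by rw [show q = -1 by linear_combination h']; ring)
  · intro h
    have h2 := congrFun (congrFun h 0) 0
    simp [Rhat, I1, Matrix.mul_apply, Fin.sum_univ_four, Matrix.one_apply,
      Matrix.vecHead, Matrix.vecTail] at h2
    rcases mul_eq_zero.mp (show q * (q - 1) = 0 by linear_combination h2) with h' | h'
    · exact hq0 h'
    · exact hq1 (by rw [show q = 1 by linear_combination h']; ring)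
  · intro h
    have h2 := congrFun (congrFun h 1) 1
    simp [Rhat, I1, Matrix.mul_apply, Fin.sum_univ_four, Matrix.one_apply,
      Matrix.vecHead, Matrix.vecTail] at h2
    rcases h2 with h' | h'
    · exact hq1 (by rw [show q = 1 by linear_combination -h']; ring)
    · exact hq1 (by rw [show q = -1 by linear_combination h']; ring)
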